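/- For every α > 0 there exists η0 > 0 such that for every 0 < η < η0 there exists a natural number n0 such that the following holds for all n ≥ n0: if H is a 3-graph on n vertices with minimum codegree δ(H) ≥ n/3 + αn, then every vertex of V(H) is (η, 1)-linked in H to at least αn/2 vertices of V(H). -/

import Mathlib

open Finset

/-- `H` is a 3-uniform hypergraph (every edge has exactly 3 vertices). -/
def Is3Graph {V : Type*} [DecidableEq V] (H : Finset (Finset V)) : Prop :=
  ∀ e ∈ H, e.card = 3

/-- The codegree of the pair `x, y` in `H`: the number of edges containing both. -/
def codeg {V : Type*} [DecidableEq V] (H : Finset (Finset V)) (x y : V) : ℕ :=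
  (H.filter fun e => x ∈ e ∧ y ∈ e).card

/-- A 5-set `S` supports a copy of the generalised triangle `T` in `H`. -/
def SupportsT {V : Type*} [DecidableEq V] (H : Finset (Finset V)) (S : Finset V) : Prop :=
  ∃ a b c d e : V, ({a, b, c, d, e} : Finset V).card = 5 ∧
    ({a, b, c, d, e} : Finset V) = S ∧
    ({a, b, c} : Finset V) ∈ H ∧ ({a, b, d} : Finset V) ∈ H ∧ ({c, d, e} : Finset V) ∈ H

/-- `P` is a `T`-tiling in `H`: a collection of pairwise disjoint 5-sets, each
supporting a copy of the generalised triangle. -/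
def IsTTiling {V : Type*} [DecidableEq V] (H P : Finset (Finset V)) : Prop :=
  (∀ S ∈ P, SupportsT H S) ∧ (P : Set (Finset V)).PairwiseDisjoint id

/-- `H[W]` has a perfect `T`-tiling: a `T`-tiling whose tiles partition `W`. -/
def HasPerfectTTilingOn {V : Type*} [DecidableEq V] (H : Finset (Finset V)) (W : Finset V) : Prop :=
  ∃ P : Finset (Finset V), IsTTiling H P ∧ P.biUnion id = W

/-- `H` has a perfect `T`-tiling. -/
def HasPerfectTTiling {V : Type*} [DecidableEq V] [Fintype V] (H : Finset (Finset V)) : Prop :=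
  HasPerfectTTilingOn H Finset.univ

/-- `u` and `v` are `(η, r)`-linked in `H`. -/
def Linked {V : Type*} [DecidableEq V] [Fintype V] (H : Finset (Finset V)) (η : ℝ) (r : ℕ)
    (u v : V) : Prop :=
  η * ((Fintype.card V).choose (5 * r - 1) : ℝ) ≤
    (({S : Finset V | S.card = 5 * r - 1 ∧ HasPerfectTTilingOn H (insert u S) ∧
        HasPerfectTTilingOn H (insert v S)} : Set (Finset V)).ncard : ℝ)

/-- `X` is `(η, r)`-closed in `H`. -/
def TClosed {V : Type*} [DecidableEq V] [Fintype V] (H : Finset (Finset V)) (η : ℝ) (r : ℕ)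
    (X : Finset V) : Prop :=
  ∀ u ∈ X, ∀ v ∈ X, Linked H η r u v

section Aux
variable {V : Type*} [DecidableEq V] [Fintype V]

/-- The joint neighbourhood of `x` and `y`. -/
def Nbr (H : Finset (Finset V)) (x y : V) : Finset V :=
  univ.filter fun w => w ≠ x ∧ w ≠ y ∧ ({x, y, w} : Finset V) ∈ H

lemma mem_Nbr {H : Finset (Finset V)} {x y w : V} :
    w ∈ Nbr H x y ↔ w ≠ x ∧ w ≠ y ∧ ({x, y, w} : Finset V) ∈ H := by
  simp [Nbr]

lemma triple_comm (x y w : V) : ({x, y, w} : Finset V) = {x, w, y} := by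
  rw [Finset.pair_comm]

lemma codeg_le_card_Nbr {H : Finset (Finset V)} (h3 : Is3Graph H) {x y : V} (hxy : x ≠ y) :
    codeg H x y ≤ (Nbr H x y).card := by
  apply Finset.card_le_card_of_surjOn (fun w => ({x, y, w} : Finset V))
  intro e he
  simp only [coe_filter, Set.mem_setOf_eq, mem_filter] at he
  obtain ⟨heH, hx, hy⟩ := he
  have h3e := h3 e heH
  have hyex : y ∈ e.erase x := Finset.mem_erase.mpr ⟨hxy.symm, hy⟩
  have hc : ((e.erase x).erase y).card = 1 := by
    rw [Finset.card_erase_of_mem hyex, Finset.card_erase_of_mem hx, h3e]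
  obtain ⟨w, hw⟩ := Finset.card_eq_one.mp hc
  have hwmem : w ∈ (e.erase x).erase y := hw ▸ Finset.mem_singleton_self w
  have hwy : w ≠ y := (Finset.mem_erase.mp hwmem).1
  have hwx : w ≠ x := (Finset.mem_erase.mp (Finset.mem_of_mem_erase hwmem)).1
  have hwe : w ∈ e := Finset.mem_of_mem_erase (Finset.mem_of_mem_erase hwmem)
  have hsub : ({x, y, w} : Finset V) ⊆ e := by
    intro z hz
    simp only [mem_insert, mem_singleton] at hz
    rcases hz with rfl | rfl | rfl <;> assumption
  have hcard : ({x, y, w} : Finset V).card = 3 := by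
    rw [card_insert_of_notMem (by simp [hxy, hwx.symm]),
      card_insert_of_notMem (by simp [hwy.symm]), card_singleton]
  have : ({x, y, w} : Finset V) = e :=
    Finset.eq_of_subset_of_card_le hsub (by rw [hcard, h3e])
  refine ⟨w, ?_, this⟩
  simp only [coe_filter, Set.mem_setOf_eq, mem_univ, true_and, Nbr]
  exact ⟨hwx, hwy, this ▸ heH⟩

lemma Nbr_swap {H : Finset (Finset V)} (h3 : Is3Graph H) {a w : V} (hwa : w ≠ a) :
    univ.filter (fun v => w ∈ Nbr H a v) = Nbr H a w := by
  ext v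
  simp only [mem_filter, mem_univ, true_and, mem_Nbr]
  constructor
  · rintro ⟨-, hwv, he⟩
    have hva : v ≠ a := by
      rintro rfl
      have hc := h3 _ he
      simp only [Finset.insert_idem] at hc
      rw [Finset.card_insert_of_notMem (by simp [Ne.symm hwa]), Finset.card_singleton] at hc
      omega
    exact ⟨hva, hwv.symm, (triple_comm a v w) ▸ he⟩
  · rintro ⟨hva, hvw, he⟩
    exact ⟨hwa, hvw.symm, (triple_comm a w v) ▸ he⟩

lemma sum_card_inter {H : Finset (Finset V)} (h3 : Is3Graph H) {D : ℝ} (hD0 : 0 ≤ D)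
    (hD : ∀ x y : V, x ≠ y → D ≤ ((Nbr H x y).card : ℝ)) {u a : V} (ha : a ≠ u) :
    D ^ 2 ≤ ∑ v : V, ((Nbr H a u ∩ Nbr H a v).card : ℝ) := by
  have step1 : ∀ v : V, ((Nbr H a u ∩ Nbr H a v).card : ℝ) =
      ∑ w ∈ Nbr H a u, (if w ∈ Nbr H a v then (1 : ℝ) else 0) := by
    intro v
    rw [← Finset.filter_mem_eq_inter, Finset.card_filter]
    push_cast
    rfl
  have hswap : ∑ v : V, ((Nbr H a u ∩ Nbr H a v).card : ℝ) =
      ∑ w ∈ Nbr H a u, ((Nbr H a w).card : ℝ) := by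
    simp_rw [step1]
    rw [Finset.sum_comm]
    refine Finset.sum_congr rfl fun w hw => ?_
    have hwa : w ≠ a := (mem_Nbr.mp hw).1
    rw [Finset.sum_boole, Nbr_swap h3 hwa]
  rw [hswap]
  calc D ^ 2 = D * D := sq D
    _ ≤ ((Nbr H a u).card : ℝ) * D := by
        exact mul_le_mul_of_nonneg_right (hD a u ha) hD0
    _ ≤ ∑ w ∈ Nbr H a u, ((Nbr H a w).card : ℝ) := by
        rw [← nsmul_eq_mul]
        apply Finset.card_nsmul_le_sum
        intro w hw
        exact hD a w (Ne.symm (mem_Nbr.mp hw).1)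

end Aux


section Aux2
variable {V : Type*} [DecidableEq V]

lemma card_five {a b c d e : V} (h1 : a ≠ b) (h2 : a ≠ c) (h3 : a ≠ d)
    (h4 : a ≠ e) (h5 : b ≠ c) (h6 : b ≠ d) (h7 : b ≠ e) (h8 : c ≠ d) (h9 : c ≠ e)
    (h10 : d ≠ e) : ({a, b, c, d, e} : Finset V).card = 5 := by
  rw [card_insert_of_notMem (by simp [h1, h2, h3, h4]),
    card_insert_of_notMem (by simp [h5, h6, h7]),
    card_insert_of_notMem (by simp [h8, h9]),
    card_insert_of_notMem (by simp [h10]), card_singleton]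

lemma card_four {a b c d : V} (h1 : a ≠ b) (h2 : a ≠ c) (h3 : a ≠ d)
    (h4 : b ≠ c) (h5 : b ≠ d) (h6 : c ≠ d) : ({a, b, c, d} : Finset V).card = 4 := by
  rw [card_insert_of_notMem (by simp [h1, h2, h3]),
    card_insert_of_notMem (by simp [h4, h5]),
    card_insert_of_notMem (by simp [h6]), card_singleton]

lemma quad_card_le (a b c d : V) : ({a, b, c, d} : Finset V).card ≤ 4 :=
  calc ({a, b, c, d} : Finset V).card ≤ ({b, c, d} : Finset V).card + 1 := card_insert_le _ _
    _ ≤ (({c, d} : Finset V).card + 1) + 1 := Nat.add_le_add_right (card_insert_le _ _) 1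
    _ ≤ ((({d} : Finset V).card + 1) + 1) + 1 :=
        Nat.add_le_add_right (Nat.add_le_add_right (card_insert_le _ _) 1) 1
    _ ≤ 4 := by simp

lemma triple_card_le (a b c : V) : ({a, b, c} : Finset V).card ≤ 3 :=
  calc ({a, b, c} : Finset V).card ≤ ({b, c} : Finset V).card + 1 := card_insert_le _ _
    _ ≤ (({c} : Finset V).card + 1) + 1 := Nat.add_le_add_right (card_insert_le _ _) 1
    _ ≤ 3 := by simp

lemma hasPerfectTTilingOn_of_supports {H : Finset (Finset V)}
    {W : Finset V} (h : SupportsT H W) : HasPerfectTTilingOn H W := by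
  refine ⟨{W}, ⟨?_, ?_⟩, ?_⟩
  · intro S hS; rw [Finset.mem_singleton] at hS; subst hS; exact h
  · rw [coe_singleton]; exact Set.pairwiseDisjoint_singleton _ _
  · simp

lemma card_sdiff_ge {s t : Finset V} : s.card ≤ (s \ t).card + t.card := by
  have hsub : s ⊆ (s \ t) ∪ t := by
    intro x hx
    by_cases hxt : x ∈ t
    · exact Finset.mem_union_right _ hxt
    · exact Finset.mem_union_left _ (Finset.mem_sdiff.mpr ⟨hx, hxt⟩)
  exact (Finset.card_le_card hsub).trans (Finset.card_union_le _ _)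

end Aux2

lemma linked_aux {n : ℕ} {H : Finset (Finset (Fin n))} (h3 : Is3Graph H)
    (hn : (1000 : ℝ) ≤ n) {D : ℝ} (hD3 : (n : ℝ) / 3 ≤ D)
    (hD : ∀ x y : Fin n, x ≠ y → D ≤ ((Nbr H x y).card : ℝ))
    {η : ℝ} (hη : 0 < η) (hηlt : η < 1 / 100000000) {u v : Fin n}
    (hbig : (n : ℝ) ^ 2 / 9 ≤ ∑ a : Fin n, ((Nbr H a u ∩ Nbr H a v).card : ℝ)) :
    Linked H η 1 u v := by
  classical
  have hn0 : (0 : ℝ) < n := by linarith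
  set A : Finset (Fin n) := univ.filter
    (fun a => a ≠ u ∧ a ≠ v ∧ (n : ℝ) / 18 ≤ ((Nbr H a u ∩ Nbr H a v).card : ℝ)) with hAdef
  set M : Fin n → Finset (Fin n) := fun a => (Nbr H a u ∩ Nbr H a v) \ {u, v} with hMdef
  have hcard_le : ∀ a w : Fin n, ((Nbr H a u ∩ Nbr H a w).card : ℝ) ≤ n := by
    intro a w
    have h := Finset.card_le_univ (Nbr H a u ∩ Nbr H a w)
    rw [Fintype.card_fin] at h
    exact_mod_cast h
  -- |A| ≥ n/18 - 2
  have hA : (n : ℝ) / 18 - 2 ≤ (A.card : ℝ) := by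
    have hsplit := Finset.sum_filter_add_sum_filter_not univ
      (fun a => a ≠ u ∧ a ≠ v ∧ (n : ℝ) / 18 ≤ ((Nbr H a u ∩ Nbr H a v).card : ℝ))
      (fun a => ((Nbr H a u ∩ Nbr H a v).card : ℝ))
    have h1 : ∑ a ∈ A, ((Nbr H a u ∩ Nbr H a v).card : ℝ) ≤ (A.card : ℝ) * n := by
      rw [← nsmul_eq_mul]
      exact Finset.sum_le_card_nsmul _ _ _ (fun a _ => hcard_le a v)
    have h2 : ∑ a ∈ univ.filter (fun a => ¬(a ≠ u ∧ a ≠ v ∧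
          (n : ℝ) / 18 ≤ ((Nbr H a u ∩ Nbr H a v).card : ℝ))),
        ((Nbr H a u ∩ Nbr H a v).card : ℝ) ≤ (n : ℝ) * ((n : ℝ) / 18) + (n : ℝ) + (n : ℝ) := by
      have hpt : ∀ a ∈ univ.filter (fun a => ¬(a ≠ u ∧ a ≠ v ∧
          (n : ℝ) / 18 ≤ ((Nbr H a u ∩ Nbr H a v).card : ℝ))),
          ((Nbr H a u ∩ Nbr H a v).card : ℝ) ≤
            (n : ℝ) / 18 + (if a = u then (n : ℝ) else 0) + (if a = v then (n : ℝ) else 0) := by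
        intro a ha
        rw [mem_filter] at ha
        have ha2 := ha.2
        push_neg at ha2
        by_cases hau : a = u
        · have h0 : (0:ℝ) ≤ if a = v then (n : ℝ) else 0 := by positivity
          rw [if_pos hau]
          have := hcard_le a v
          linarith
        · by_cases hav : a = v
          · have h0 : (0:ℝ) ≤ if a = u then (n : ℝ) else 0 := by positivity
            rw [if_pos hav]
            have := hcard_le a v
            linarith
          · have hlt := ha2 hau hav
            rw [if_neg hau, if_neg hav]
            linarith
      calc ∑ a ∈ univ.filter (fun a => ¬(a ≠ u ∧ a ≠ v ∧
              (n : ℝ) / 18 ≤ ((Nbr H a u ∩ Nbr H a v).card : ℝ))),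
            ((Nbr H a u ∩ Nbr H a v).card : ℝ)
          ≤ ∑ a ∈ univ.filter (fun a => ¬(a ≠ u ∧ a ≠ v ∧
              (n : ℝ) / 18 ≤ ((Nbr H a u ∩ Nbr H a v).card : ℝ))),
            ((n : ℝ) / 18 + (if a = u then (n : ℝ) else 0) + (if a = v then (n : ℝ) else 0)) :=
            Finset.sum_le_sum hpt
        _ ≤ ∑ a : Fin n,
            ((n : ℝ) / 18 + (if a = u then (n : ℝ) else 0) + (if a = v then (n : ℝ) else 0)) := by
            apply Finset.sum_le_sum_of_subset_of_nonneg (Finset.filter_subset _ _)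
            intro a _ _
            positivity
        _ ≤ (n : ℝ) * ((n : ℝ) / 18) + (n : ℝ) + (n : ℝ) := by
            rw [Finset.sum_add_distrib, Finset.sum_add_distrib]
            simp only [Finset.sum_const, Finset.card_univ, Fintype.card_fin, nsmul_eq_mul,
              Finset.sum_ite_eq', Finset.mem_univ, if_true]
            linarith
    have hAcast : (0:ℝ) ≤ (A.card : ℝ) := by positivity
    nlinarith [hbig, hsplit, h1, h2]
  -- |M a| ≥ n/18 - 2 for a ∈ A
  have hM : ∀ a ∈ A, (n : ℝ) / 18 - 2 ≤ ((M a).card : ℝ) := by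
    intro a ha
    rw [hAdef, mem_filter] at ha
    have hbig' := ha.2.2.2
    have hcl : (Nbr H a u ∩ Nbr H a v).card ≤ (M a).card + 2 := by
      have h1 := card_sdiff_ge (s := Nbr H a u ∩ Nbr H a v) (t := ({u, v} : Finset (Fin n)))
      have h2 : ({u, v} : Finset (Fin n)).card ≤ 2 := (card_insert_le _ _).trans (by simp)
      simp only [hMdef]
      omega
    have hclR : ((Nbr H a u ∩ Nbr H a v).card : ℝ) ≤ ((M a).card : ℝ) + 2 := by exact_mod_cast hcl
    linarith
  -- facts about members of M a
  have hMfacts : ∀ a : Fin n, ∀ c ∈ M a, c ≠ a ∧ c ≠ u ∧ c ≠ v ∧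
      ({a, u, c} : Finset (Fin n)) ∈ H ∧ ({a, v, c} : Finset (Fin n)) ∈ H := by
    intro a c hc
    rw [hMdef] at hc
    simp only [Finset.mem_sdiff, Finset.mem_inter, mem_Nbr, Finset.mem_insert,
      Finset.mem_singleton, not_or] at hc
    exact ⟨hc.1.1.1, hc.1.1.2.1, hc.1.2.2.1, hc.1.1.2.2, hc.1.2.2.2⟩
  -- the big family of tuples
  set Q : Finset ((_ : Fin n) × (_ : Fin n) × (_ : Fin n) × Fin n) :=
    A.sigma (fun a => (M a).sigma (fun c => ((M a).erase c).sigma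
      (fun d => Nbr H c d \ {u, v, a}))) with hQdef
  have hE : ∀ a : Fin n, ∀ c ∈ M a, ∀ d ∈ (M a).erase c,
      (n : ℝ) / 4 ≤ ((Nbr H c d \ {u, v, a}).card : ℝ) := by
    intro a c hc d hd
    have hdc : d ≠ c := (Finset.mem_erase.mp hd).1
    have hNcd := hD c d (Ne.symm hdc)
    have h1 := card_sdiff_ge (s := Nbr H c d) (t := ({u, v, a} : Finset (Fin n)))
    have h2 := triple_card_le u v a
    have h3' : (Nbr H c d).card ≤ (Nbr H c d \ {u, v, a}).card + 3 := by omega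
    have h3R : ((Nbr H c d).card : ℝ) ≤ ((Nbr H c d \ {u, v, a}).card : ℝ) + 3 := by
      exact_mod_cast h3'
    linarith
  have hQcard : ((n : ℝ) / 20) * (((n : ℝ) / 20) * (((n : ℝ) / 20) * ((n : ℝ) / 4)))
      ≤ (Q.card : ℝ) := by
    have hQeq : (Q.card : ℝ) = ∑ a ∈ A, ∑ c ∈ M a, ∑ d ∈ (M a).erase c,
        ((Nbr H c d \ {u, v, a}).card : ℝ) := by
      rw [hQdef]
      simp only [Finset.card_sigma]
      push_cast
      rfl
    rw [hQeq]
    have hMone : ∀ a ∈ A, ∀ c ∈ M a, (n : ℝ) / 20 ≤ (((M a).erase c).card : ℝ) := by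
      intro a ha c hc
      have hMa := hM a ha
      have h1le : 1 ≤ (M a).card := Finset.card_pos.mpr ⟨c, hc⟩
      rw [Finset.card_erase_of_mem hc, Nat.cast_sub h1le]
      push_cast
      linarith
    have hin : ∀ a ∈ A, ∀ c ∈ M a,
        ((n : ℝ) / 20) * ((n : ℝ) / 4) ≤ ∑ d ∈ (M a).erase c,
          ((Nbr H c d \ {u, v, a}).card : ℝ) := by
      intro a ha c hc
      calc ((n : ℝ) / 20) * ((n : ℝ) / 4)
          ≤ ((((M a).erase c).card : ℝ)) * ((n : ℝ) / 4) := by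
            apply mul_le_mul_of_nonneg_right (hMone a ha c hc) (by positivity)
        _ ≤ _ := by
            rw [← nsmul_eq_mul]
            exact Finset.card_nsmul_le_sum _ _ _ (fun d hd => hE a c hc d hd)
    have hmid : ∀ a ∈ A, ((n : ℝ) / 20) * (((n : ℝ) / 20) * ((n : ℝ) / 4)) ≤
        ∑ c ∈ M a, ∑ d ∈ (M a).erase c, ((Nbr H c d \ {u, v, a}).card : ℝ) := by
      intro a ha
      calc ((n : ℝ) / 20) * (((n : ℝ) / 20) * ((n : ℝ) / 4))
          ≤ (((M a).card : ℝ)) * (((n : ℝ) / 20) * ((n : ℝ) / 4)) := by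
            have := hM a ha
            apply mul_le_mul_of_nonneg_right (by linarith) (by positivity)
        _ ≤ _ := by
            rw [← nsmul_eq_mul]
            exact Finset.card_nsmul_le_sum _ _ _ (fun c hc => hin a ha c hc)
    calc ((n : ℝ) / 20) * (((n : ℝ) / 20) * (((n : ℝ) / 20) * ((n : ℝ) / 4)))
        ≤ ((A.card : ℝ)) * (((n : ℝ) / 20) * (((n : ℝ) / 20) * ((n : ℝ) / 4))) := by
          apply mul_le_mul_of_nonneg_right (by linarith) (by positivity)
      _ ≤ _ := by
          rw [← nsmul_eq_mul]
          exact Finset.card_nsmul_le_sum _ _ _ (fun a ha => hmid a ha)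
  -- the image
  set f : ((_ : Fin n) × (_ : Fin n) × (_ : Fin n) × Fin n) → Finset (Fin n) :=
    fun t => {t.1, t.2.1, t.2.2.1, t.2.2.2} with hfdef
  set img : Finset (Finset (Fin n)) := Q.image f with himgdef
  have hfib : Q.card ≤ 256 * img.card := by
    apply Finset.card_le_mul_card_image
    intro b hb
    have hb4 : b.card ≤ 4 := by
      obtain ⟨t, -, rfl⟩ := Finset.mem_image.mp hb
      exact quad_card_le _ _ _ _
    have h1 : (Q.filter (fun t => f t = b)).card ≤ (b ×ˢ b ×ˢ b ×ˢ b).card := by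
      apply Finset.card_le_card_of_injOn (fun t => (t.1, t.2.1, t.2.2.1, t.2.2.2))
      · intro t ht
        rw [Finset.mem_coe, mem_filter] at ht
        have hmem : ∀ x ∈ f t, x ∈ b := fun x hx => ht.2 ▸ hx
        simp only [Finset.mem_coe, Finset.mem_product]
        exact ⟨hmem _ (by simp [hfdef]), hmem _ (by simp [hfdef]),
          hmem _ (by simp [hfdef]), hmem _ (by simp [hfdef])⟩
      · rintro ⟨a, c, d, e⟩ - ⟨a', c', d', e'⟩ - h
        simp only [Prod.mk.injEq] at h
        obtain ⟨rfl, rfl, rfl, rfl⟩ := h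
        rfl
    have h2 : (b ×ˢ b ×ˢ b ×ˢ b).card ≤ 256 := by
      rw [Finset.card_product, Finset.card_product, Finset.card_product]
      calc b.card * (b.card * (b.card * b.card)) ≤ 4 * (4 * (4 * 4)) :=
        Nat.mul_le_mul hb4 (Nat.mul_le_mul hb4 (Nat.mul_le_mul hb4 hb4))
        _ = 256 := rfl
    exact h1.trans h2
  -- every member of the image is a good linking set
  have himg_mem : ∀ S ∈ img, S.card = 4 ∧ HasPerfectTTilingOn H (insert u S) ∧
      HasPerfectTTilingOn H (insert v S) := by
    intro S hS
    obtain ⟨⟨a, c, d, e⟩, ht, rfl⟩ := Finset.mem_image.mp hS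
    rw [hQdef] at ht
    simp only [Finset.mem_sigma] at ht
    obtain ⟨ha, hc, hd, he⟩ := ht
    have hauv : a ≠ u ∧ a ≠ v := by
      rw [hAdef, Finset.mem_filter] at ha
      exact ⟨ha.2.1, ha.2.2.1⟩
    obtain ⟨hau, hav⟩ := hauv
    obtain ⟨hca, hcu, hcv, hec1, hec2⟩ := hMfacts a c hc
    have hdMa : d ∈ M a := Finset.mem_of_mem_erase hd
    have hdc : d ≠ c := (Finset.mem_erase.mp hd).1
    obtain ⟨hda, hdu, hdv, hed1, hed2⟩ := hMfacts a d hdMa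
    have heN : e ∈ Nbr H c d := (Finset.mem_sdiff.mp he).1
    have heuva : e ∉ ({u, v, a} : Finset (Fin n)) := (Finset.mem_sdiff.mp he).2
    have heu : e ≠ u := fun h => heuva (by simp [h])
    have hev : e ≠ v := fun h => heuva (by simp [h])
    have hea : e ≠ a := fun h => heuva (by simp [h])
    obtain ⟨hec, hed, hecd⟩ := mem_Nbr.mp heN
    refine ⟨card_four (Ne.symm hca) (Ne.symm hda) (Ne.symm hea) (Ne.symm hdc)
        (Ne.symm hec) (Ne.symm hed), ?_, ?_⟩
    · apply hasPerfectTTilingOn_of_supports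
      refine ⟨a, u, c, d, e, ?_, ?_, hec1, hed1, hecd⟩
      · exact card_five hau (Ne.symm hca) (Ne.symm hda) (Ne.symm hea) (Ne.symm hcu)
          (Ne.symm hdu) (Ne.symm heu) (Ne.symm hdc) (Ne.symm hec) (Ne.symm hed)
      · show ({a, u, c, d, e} : Finset (Fin n)) = insert u (f ⟨a, c, d, e⟩)
        rw [hfdef]
        exact Finset.insert_comm a u _
    · apply hasPerfectTTilingOn_of_supports
      refine ⟨a, v, c, d, e, ?_, ?_, hec2, hed2, hecd⟩
      · exact card_five hav (Ne.symm hca) (Ne.symm hda) (Ne.symm hea) (Ne.symm hcv)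
          (Ne.symm hdv) (Ne.symm hev) (Ne.symm hdc) (Ne.symm hec) (Ne.symm hed)
      · show ({a, v, c, d, e} : Finset (Fin n)) = insert v (f ⟨a, c, d, e⟩)
        rw [hfdef]
        exact Finset.insert_comm a v _
  -- finish
  have himg_sub : (img : Set (Finset (Fin n))) ⊆
      {S : Finset (Fin n) | S.card = 5 * 1 - 1 ∧ HasPerfectTTilingOn H (insert u S) ∧
        HasPerfectTTilingOn H (insert v S)} := by
    intro S hS
    obtain ⟨h1, h2, h3'⟩ := himg_mem S (Finset.mem_coe.mp hS)
    exact ⟨h1, h2, h3'⟩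
  have hncard : (img.card : ℝ) ≤
      ((({S : Finset (Fin n) | S.card = 5 * 1 - 1 ∧ HasPerfectTTilingOn H (insert u S) ∧
        HasPerfectTTilingOn H (insert v S)} : Set (Finset (Fin n))).ncard : ℝ)) := by
    have h := Set.ncard_le_ncard himg_sub (Set.toFinite _)
    rw [Set.ncard_coe_finset] at h
    exact_mod_cast h
  unfold Linked
  rw [Fintype.card_fin]
  have hch : ((n.choose (5 * 1 - 1)) : ℝ) ≤ (n : ℝ) ^ 4 := by
    have h := Nat.choose_le_pow_div (α := ℝ) 4 n
    norm_num [Nat.factorial] at h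
    have hpow : (0:ℝ) ≤ (n : ℝ) ^ 4 := by positivity
    calc ((n.choose (5 * 1 - 1)) : ℝ) = ((n.choose 4) : ℝ) := by norm_num
      _ ≤ (n : ℝ) ^ 4 / 24 := h
      _ ≤ (n : ℝ) ^ 4 := by linarith
  have hQR : (Q.card : ℝ) ≤ 256 * (img.card : ℝ) := by exact_mod_cast hfib
  have hchpos : (0:ℝ) ≤ ((n.choose (5 * 1 - 1)) : ℝ) := by positivity
  calc η * ((n.choose (5 * 1 - 1)) : ℝ) ≤ η * (n : ℝ) ^ 4 :=
        mul_le_mul_of_nonneg_left hch hη.le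
    _ ≤ (1 / 100000000) * (n : ℝ) ^ 4 := by
        apply mul_le_mul_of_nonneg_right hηlt.le (by positivity)
    _ ≤ (img.card : ℝ) := by nlinarith [hQcard, hQR, pow_nonneg hn0.le 4]
    _ ≤ _ := hncard



/-- For every `α > 0` there is `η0 > 0` such that for every `0 < η < η0` there is `n0`
such that in any 3-graph on `n ≥ n0` vertices with minimum codegree at least `n/3 + αn`,
every vertex is `(η, 1)`-linked to at least `αn/2` vertices. -/
theorem many_linked_vertices :
    ∀ α : ℝ, 0 < α → ∃ η0 : ℝ, 0 < η0 ∧ ∀ η : ℝ, 0 < η → η < η0 →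
      ∃ n0 : ℕ, ∀ n : ℕ, n0 ≤ n →
        ∀ H : Finset (Finset (Fin n)), Is3Graph H →
          (∀ x y : Fin n, x ≠ y → (n : ℝ) / 3 + α * n ≤ (codeg H x y : ℝ)) →
          ∀ u : Fin n,
            α * n / 2 ≤ (({v : Fin n | Linked H η 1 u v} : Set (Fin n)).ncard : ℝ) := by
  intro α hα
  refine ⟨1 / 100000000, by norm_num, ?_⟩
  intro η hη hηlt
  refine ⟨max 1000 ⌈6 * (1 / 3 + α) ^ 2 / α⌉₊, ?_⟩
  intro n hn H h3 hdeg u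
  classical
  have hn1000 : (1000 : ℕ) ≤ n := le_trans (le_max_left _ _) hn
  have hnR : (1000 : ℝ) ≤ (n : ℝ) := by exact_mod_cast hn1000
  have hn0 : (0 : ℝ) < n := by linarith
  have hnα : 6 * (1 / 3 + α) ^ 2 ≤ (n : ℝ) * α := by
    have h1 : ⌈6 * (1 / 3 + α) ^ 2 / α⌉₊ ≤ n := le_trans (le_max_right _ _) hn
    have h2 : 6 * (1 / 3 + α) ^ 2 / α ≤ (n : ℝ) :=
      le_trans (Nat.le_ceil _) (by exact_mod_cast h1)
    rw [div_le_iff₀ hα] at h2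
    linarith
  set D : ℝ := (n : ℝ) / 3 + α * n with hDdef
  have hD0 : (0 : ℝ) ≤ D := by positivity
  have hD3 : (n : ℝ) / 3 ≤ D := by nlinarith
  have hD : ∀ x y : Fin n, x ≠ y → D ≤ ((Nbr H x y).card : ℝ) := by
    intro x y hxy
    calc D ≤ (codeg H x y : ℝ) := hdeg x y hxy
      _ ≤ _ := by exact_mod_cast codeg_le_card_Nbr h3 hxy
  have hcard_le : ∀ a w : Fin n, ((Nbr H a u ∩ Nbr H a w).card : ℝ) ≤ n := by
    intro a w
    have h := Finset.card_le_univ (Nbr H a u ∩ Nbr H a w)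
    rw [Fintype.card_fin] at h
    exact_mod_cast h
  set B : Finset (Fin n) := univ.filter
    (fun v => (n : ℝ) ^ 2 / 9 ≤ ∑ a : Fin n, ((Nbr H a u ∩ Nbr H a v).card : ℝ)) with hBdef
  -- lower bound on total sum
  have htot : ((n : ℝ) - 1) * D ^ 2 ≤
      ∑ v : Fin n, ∑ a : Fin n, ((Nbr H a u ∩ Nbr H a v).card : ℝ) := by
    rw [Finset.sum_comm]
    have hcerase : (((univ : Finset (Fin n)).erase u).card : ℝ) = (n : ℝ) - 1 := by
      rw [Finset.card_erase_of_mem (mem_univ u), Finset.card_univ, Fintype.card_fin]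
      have h1 : 1 ≤ n := by omega
      push_cast [Nat.cast_sub h1]
      ring
    calc ((n : ℝ) - 1) * D ^ 2
        = ((((univ : Finset (Fin n)).erase u).card : ℝ)) * D ^ 2 := by rw [hcerase]
      _ ≤ ∑ a ∈ (univ : Finset (Fin n)).erase u,
            ∑ v : Fin n, ((Nbr H a u ∩ Nbr H a v).card : ℝ) := by
          rw [← nsmul_eq_mul]
          exact Finset.card_nsmul_le_sum _ _ _
            (fun a ha => sum_card_inter h3 hD0 hD (Finset.mem_erase.mp ha).1)
      _ ≤ ∑ a : Fin n, ∑ v : Fin n, ((Nbr H a u ∩ Nbr H a v).card : ℝ) :=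
          Finset.sum_le_sum_of_subset_of_nonneg (Finset.subset_univ _)
            (fun a _ _ => Finset.sum_nonneg fun v _ => Nat.cast_nonneg _)
  -- upper bound via B
  have hsum_le_n2 : ∀ v : Fin n,
      ∑ a : Fin n, ((Nbr H a u ∩ Nbr H a v).card : ℝ) ≤ (n : ℝ) ^ 2 := by
    intro v
    calc ∑ a : Fin n, ((Nbr H a u ∩ Nbr H a v).card : ℝ) ≤ ∑ _a : Fin n, (n : ℝ) :=
          Finset.sum_le_sum (fun a _ => hcard_le a v)
      _ = (n : ℝ) ^ 2 := by
          rw [Finset.sum_const, Finset.card_univ, Fintype.card_fin, nsmul_eq_mul]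
          ring
  have hBcard : α * n / 2 ≤ (B.card : ℝ) := by
    have hsplit := Finset.sum_filter_add_sum_filter_not univ
      (fun v => (n : ℝ) ^ 2 / 9 ≤ ∑ a : Fin n, ((Nbr H a u ∩ Nbr H a v).card : ℝ))
      (fun v => ∑ a : Fin n, ((Nbr H a u ∩ Nbr H a v).card : ℝ))
    have h1 : ∑ v ∈ B, ∑ a : Fin n, ((Nbr H a u ∩ Nbr H a v).card : ℝ)
        ≤ (B.card : ℝ) * (n : ℝ) ^ 2 := by
      rw [← nsmul_eq_mul]
      exact Finset.sum_le_card_nsmul _ _ _ (fun v _ => hsum_le_n2 v)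
    have h2 : ∑ v ∈ univ.filter (fun v => ¬((n : ℝ) ^ 2 / 9 ≤
          ∑ a : Fin n, ((Nbr H a u ∩ Nbr H a v).card : ℝ))),
        ∑ a : Fin n, ((Nbr H a u ∩ Nbr H a v).card : ℝ) ≤ (n : ℝ) * ((n : ℝ) ^ 2 / 9) := by
      have hcle : ((univ.filter (fun v => ¬((n : ℝ) ^ 2 / 9 ≤
          ∑ a : Fin n, ((Nbr H a u ∩ Nbr H a v).card : ℝ)))).card : ℝ) ≤ (n : ℝ) := by
        have h := Finset.card_le_univ (univ.filter (fun v => ¬((n : ℝ) ^ 2 / 9 ≤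
          ∑ a : Fin n, ((Nbr H a u ∩ Nbr H a v).card : ℝ))))
        rw [Fintype.card_fin] at h
        exact_mod_cast h
      calc ∑ v ∈ univ.filter (fun v => ¬((n : ℝ) ^ 2 / 9 ≤
              ∑ a : Fin n, ((Nbr H a u ∩ Nbr H a v).card : ℝ))),
            ∑ a : Fin n, ((Nbr H a u ∩ Nbr H a v).card : ℝ)
          ≤ ((univ.filter (fun v => ¬((n : ℝ) ^ 2 / 9 ≤
              ∑ a : Fin n, ((Nbr H a u ∩ Nbr H a v).card : ℝ)))).card : ℝ) * ((n : ℝ) ^ 2 / 9) := by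
            rw [← nsmul_eq_mul]
            apply Finset.sum_le_card_nsmul
            intro v hv
            rw [Finset.mem_filter] at hv
            linarith [not_le.mp hv.2]
        _ ≤ (n : ℝ) * ((n : ℝ) ^ 2 / 9) := by
            apply mul_le_mul_of_nonneg_right hcle
            positivity
    by_contra hcon
    push_neg at hcon
    have hBn2 : (B.card : ℝ) * (n : ℝ) ^ 2 < (α * n / 2) * (n : ℝ) ^ 2 :=
      mul_lt_mul_of_pos_right hcon (by positivity)
    rw [hDdef] at htot
    have key : 6 * (1 / 3 + α) ^ 2 * (n : ℝ) ^ 2 ≤ (n : ℝ) * α * (n : ℝ) ^ 2 :=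
      mul_le_mul_of_nonneg_right hnα (by positivity)
    have hα2n : (0 : ℝ) < α ^ 2 * (n : ℝ) ^ 3 := by positivity
    nlinarith [htot, hsplit, h1, h2, hBn2, key, hα2n]
  -- every vertex of B is linked to u
  have hBsub : (B : Set (Fin n)) ⊆ {v : Fin n | Linked H η 1 u v} := by
    intro v hv
    rw [Finset.mem_coe, hBdef, Finset.mem_filter] at hv
    exact linked_aux h3 hnR hD3 hD hη hηlt hv.2
  have hfin := Set.ncard_le_ncard hBsub (Set.toFinite _)
  rw [Set.ncard_coe_finset] at hfin
  calc α * n / 2 ≤ (B.card : ℝ) := hBcard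
    _ ≤ _ := by exact_mod_cast hfin
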